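/- Every finite connected graph G has a nested set of bonds that efficiently distinguishes all the edge-blocks of G: for every two disjoint edge-blocks β₁, β₂ there is a bond in the set separating β₁ from β₂ whose size equals the minimum size of an edge set separating β₁ from β₂. -/

import Mathlib

open SimpleGraph

variable {V : Type*}

/-- The cut induced by a side `A`: edges of `G` with one endpoint in `A` and one outside. -/
def cutEdges (G : SimpleGraph V) (A : Set V) : Set (Sym2 V) :=
  {e | ∃ u v, e = s(u, v) ∧ G.Adj u v ∧ u ∈ A ∧ v ∉ A}

/-- A cut-separation, given by a side `A`: both sides nonempty. -/
def IsCutSep (_G : SimpleGraph V) (A : Set V) : Prop :=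
  A.Nonempty ∧ Aᶜ.Nonempty

/-- A bond-separation: a cut-separation both of whose sides induce connected subgraphs. -/
def IsBondSep (G : SimpleGraph V) (A : Set V) : Prop :=
  A.Nonempty ∧ Aᶜ.Nonempty ∧ (G.induce A).Connected ∧ (G.induce Aᶜ).Connected

/-- Two separations (given by sides) are nested. -/
def Nested (A C : Set V) : Prop :=
  A ⊆ C ∨ A ⊆ Cᶜ ∨ Aᶜ ⊆ C ∨ Aᶜ ⊆ Cᶜ

/-- Two separations cross if they are not nested. -/
def Crosses (A C : Set V) : Prop := ¬ Nested A C

/-- `u` and `v` are (<k)-inseparable: no edge set of size < k separates them. -/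
def Insep (G : SimpleGraph V) (k : ℕ) (u v : V) : Prop :=
  ∀ F : Set (Sym2 V), F.Finite → F.ncard < k → (G.deleteEdges F).Reachable u v

/-- A k-edge-block: an equivalence class of (<k)-inseparability. -/
def IsEdgeBlock (G : SimpleGraph V) (k : ℕ) (B : Set V) : Prop :=
  ∃ v, B = {w | Insep G k v w}

/-- The edge set `F` separates `B₁` from `B₂` in `G`. -/
def SepSets (G : SimpleGraph V) (B₁ B₂ : Set V) (F : Set (Sym2 V)) : Prop :=
  ∀ u ∈ B₁, ∀ v ∈ B₂, ¬ (G.deleteEdges F).Reachable u v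

/-- The minimum size of an edge set separating `B₁` from `B₂`. -/
noncomputable def sepOrder (G : SimpleGraph V) (B₁ B₂ : Set V) : ℕ :=
  sInf {n | ∃ F : Set (Sym2 V), F.Finite ∧ F.ncard = n ∧ SepSets G B₁ B₂ F}

lemma mem_cut {G : SimpleGraph V} {A : Set V} {x y : V} :
    s(x, y) ∈ cutEdges G A ↔ G.Adj x y ∧ ((x ∈ A ∧ y ∉ A) ∨ (y ∈ A ∧ x ∉ A)) := by
  constructor
  · rintro ⟨u, v, he, hadj, hu, hv⟩
    rw [Sym2.eq_iff] at he
    rcases he with ⟨rfl, rfl⟩ | ⟨rfl, rfl⟩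
    · exact ⟨hadj, Or.inl ⟨hu, hv⟩⟩
    · exact ⟨hadj.symm, Or.inr ⟨hu, hv⟩⟩
  · rintro ⟨hadj, ⟨hx, hy⟩ | ⟨hy, hx⟩⟩
    · exact ⟨x, y, rfl, hadj, hx, hy⟩
    · exact ⟨y, x, Sym2.eq_swap, hadj.symm, hy, hx⟩

lemma cut_compl (G : SimpleGraph V) (A : Set V) : cutEdges G Aᶜ = cutEdges G A := by
  ext e
  induction e using Sym2.ind with
  | _ x y =>
    simp only [mem_cut, Set.mem_compl_iff, not_not]
    tauto

lemma cut_finite [Finite V] (G : SimpleGraph V) (A : Set V) : (cutEdges G A).Finite := by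
  have : Finite (Sym2 V) := Finite.of_surjective (fun p : V × V => s(p.1, p.2))
    (fun e => e.ind fun x y => ⟨(x, y), rfl⟩)
  exact Set.toFinite _

/-- membership in `A` is preserved along walks in `G` minus the cut of `A`. -/
lemma cutClosure_walk {G : SimpleGraph V} {A : Set V} :
    ∀ {a b : V}, (G.deleteEdges (cutEdges G A)).Walk a b → a ∈ A → b ∈ A
  | _, _, Walk.nil, ha => ha
  | _, _, Walk.cons h p, ha => by
    rw [deleteEdges_adj] at h
    refine cutClosure_walk p ?_
    by_contra hy
    exact h.2 (mem_cut.2 ⟨h.1, Or.inl ⟨ha, hy⟩⟩)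

lemma cutClosure {G : SimpleGraph V} {A : Set V} {a b : V}
    (hr : (G.deleteEdges (cutEdges G A)).Reachable a b) (ha : a ∈ A) : b ∈ A := by
  obtain ⟨p⟩ := hr; exact cutClosure_walk p ha

lemma sep_of_cut {G : SimpleGraph V} {A : Set V} {a b : V} (ha : a ∈ A) (hb : b ∉ A) :
    ¬ (G.deleteEdges (cutEdges G A)).Reachable a b :=
  fun hr => hb (cutClosure hr ha)

lemma exists_cross_walk {G : SimpleGraph V} {Y : Set V} :
    ∀ {a b : V}, G.Walk a b → a ∈ Y → b ∉ Y → (cutEdges G Y).Nonempty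
  | _, _, Walk.nil, ha, hb => absurd ha hb
  | _, _, @Walk.cons _ _ x y _ h p, ha, hb => by
    by_cases hy : y ∈ Y
    · exact exists_cross_walk p hy hb
    · exact ⟨s(x, y), mem_cut.2 ⟨h, Or.inl ⟨ha, hy⟩⟩⟩

/-- In a connected graph, a nonempty proper subset has a crossing edge. -/
lemma exists_cross {G : SimpleGraph V} (hG : G.Connected) {Y : Set V}
    (hY : Y.Nonempty) (hY' : Yᶜ.Nonempty) : (cutEdges G Y).Nonempty := by
  obtain ⟨a, ha⟩ := hY
  obtain ⟨b, hb⟩ := hY'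
  obtain ⟨p⟩ := hG.preconnected a b
  clear hG
  exact exists_cross_walk p ha hb

/-- min cut size between two vertices -/
noncomputable def lam (G : SimpleGraph V) (u v : V) : ℕ :=
  sInf {n | ∃ F : Set (Sym2 V), F.Finite ∧ F.ncard = n ∧ ¬ (G.deleteEdges F).Reachable u v}

lemma lam_le {G : SimpleGraph V} {u v : V} {F : Set (Sym2 V)} (hF : F.Finite)
    (hsep : ¬ (G.deleteEdges F).Reachable u v) : lam G u v ≤ F.ncard :=
  Nat.sInf_le ⟨F, hF, rfl, hsep⟩

lemma lam_symm (G : SimpleGraph V) (u v : V) : lam G u v = lam G v u := by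
  unfold lam
  congr 1
  ext n
  constructor <;> rintro ⟨F, h1, h2, h3⟩ <;> exact ⟨F, h1, h2, fun hr => h3 hr.symm⟩

lemma cut_ge_lam [Finite V] {G : SimpleGraph V} {A : Set V} {a b : V}
    (ha : a ∈ A) (hb : b ∉ A) : lam G a b ≤ (cutEdges G A).ncard :=
  lam_le (cut_finite G A) (sep_of_cut ha hb)

set_option linter.unusedSectionVars false

section Mid
variable [Finite V] {G : SimpleGraph V}

/-- a "good side" for the pair (u,v): a minimum cut side. -/
def GoodFor (G : SimpleGraph V) (u v : V) (A : Set V) : Prop :=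
  u ∈ A ∧ v ∉ A ∧ (cutEdges G A).ncard = lam G u v

def GoodSide (G : SimpleGraph V) (A : Set V) : Prop := ∃ u v, GoodFor G u v A

lemma lam_set_nonempty (u v : V) (huv : u ≠ v) :
    {n | ∃ F : Set (Sym2 V), F.Finite ∧ F.ncard = n ∧ ¬ (G.deleteEdges F).Reachable u v}.Nonempty := by
  have hfin : (Set.univ : Set (Sym2 V)).Finite := by
    have : Finite (Sym2 V) := Finite.of_surjective (fun p : V × V => s(p.1, p.2))
      (fun e => e.ind fun x y => ⟨(x, y), rfl⟩)
    exact Set.toFinite _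
  refine ⟨_, Set.univ, hfin, rfl, fun hr => ?_⟩
  obtain ⟨p⟩ := hr
  cases p with
  | nil => exact huv rfl
  | cons h p => rw [deleteEdges_adj] at h; exact h.2 (Set.mem_univ _)

/-- reach set of `a` in `G` minus `F`. -/
def reachSet (G : SimpleGraph V) (F : Set (Sym2 V)) (a : V) : Set V :=
  {w | (G.deleteEdges F).Reachable a w}

lemma cut_reachSet_subset {F : Set (Sym2 V)} {a : V} :
    cutEdges G (reachSet G F a) ⊆ F := by
  rintro e ⟨x, y, rfl, hadj, hx, hy⟩
  by_contra he
  exact hy (hx.trans (Adj.reachable (by rw [deleteEdges_adj]; exact ⟨hadj, he⟩)))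

lemma exists_min_side (u v : V) (huv : u ≠ v) : ∃ A, GoodFor G u v A := by
  have hmem := Nat.sInf_mem (lam_set_nonempty (G := G) u v huv)
  obtain ⟨F, hFfin, hFcard, hFsep⟩ := hmem
  set A := reachSet G F u with hA
  have hu : u ∈ A := Reachable.refl u
  have hv : v ∉ A := hFsep
  refine ⟨A, hu, hv, le_antisymm ?_ (cut_ge_lam hu hv)⟩
  calc (cutEdges G A).ncard ≤ F.ncard := Set.ncard_le_ncard cut_reachSet_subset hFfin
    _ = lam G u v := hFcard

/-- walks in the deleted graph starting in A (whose cut is deleted) project to induce A -/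
lemma walk_induce {A : Set V} :
    ∀ {a b : V}, (G.deleteEdges (cutEdges G A)).Walk a b → ∀ (ha : a ∈ A) (hb : b ∈ A),
      (G.induce A).Reachable ⟨a, ha⟩ ⟨b, hb⟩
  | _, _, Walk.nil, _, _ => Reachable.refl _
  | _, _, @Walk.cons _ _ x y _ h p, ha, hb => by
    rw [deleteEdges_adj] at h
    have hy : y ∈ A := by
      by_contra hy
      exact h.2 (mem_cut.2 ⟨h.1, Or.inl ⟨ha, hy⟩⟩)
    exact (Adj.reachable (by exact h.1 : (G.induce A).Adj ⟨x, ha⟩ ⟨y, hy⟩)).trans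
      (walk_induce p hy hb)

/-- Key connectivity lemma: a minimum cut side induces a connected graph. -/
lemma min_side_connected (hG : G.Connected) {A : Set V} {u v : V}
    (hgood : GoodFor G u v A) : (G.induce A).Connected := by
  obtain ⟨hu, hv, hcard⟩ := hgood
  set F := cutEdges G A with hF
  set H := G.deleteEdges F with hH
  -- Step 2: every w ∈ A is H-reachable from u
  have hreach : ∀ w ∈ A, H.Reachable u w := by
    intro w₀ hw₀
    by_contra hnr
    set X := reachSet G F u with hX
    have hXA : X ⊆ A := fun z hz => cutClosure hz hu
    have hXcut : cutEdges G X ⊆ F := cut_reachSet_subset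
    have hXsep : ¬ (G.deleteEdges (cutEdges G X)).Reachable u v := by
      refine sep_of_cut (Reachable.refl u) ?_
      exact fun h => hv (hXA h)
    have hXge : lam G u v ≤ (cutEdges G X).ncard := cut_ge_lam (Reachable.refl u) (fun h => hv (hXA h))
    have hXeq : cutEdges G X = F := by
      exact Set.eq_of_subset_of_ncard_le hXcut (by rw [hcard]; exact hXge) (cut_finite G A)
    set Y := reachSet G F w₀ with hY
    have hYA : Y ⊆ A := fun z hz => cutClosure hz hw₀
    have hYX : ∀ z, z ∈ Y → z ∉ X := by
      intro z hzY hzX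
      exact hnr ((hzX : H.Reachable u z).trans (hzY : H.Reachable w₀ z).symm)
    have hYcut : cutEdges G Y ⊆ F := cut_reachSet_subset
    have hYempty : cutEdges G Y = ∅ := by
      apply Set.eq_empty_of_forall_notMem
      rintro e he
      have heF : e ∈ F := hYcut he
      have heX : e ∈ cutEdges G X := hXeq ▸ heF
      obtain ⟨p, q, rfl, hadj, hpY, hqY⟩ := he
      -- the X-endpoint of e is the A-endpoint; but p ∈ Y ⊆ A, q should be the Aᶜ one
      rw [mem_cut] at heX
      rcases heX.2 with ⟨hpX, hqX⟩ | ⟨hqX, hpX⟩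
      · exact (hYX p hpY) hpX
      · -- q ∈ X ⊆ A, p ∈ Y ⊆ A : contradiction with e ∈ F = cutEdges A
        rw [hF, mem_cut] at heF
        rcases heF.2 with ⟨_, hqA⟩ | ⟨_, hpA⟩
        · exact hqA (hXA hqX)
        · exact hpA (hYA hpY)
    have hYne : Y.Nonempty := ⟨w₀, Reachable.refl w₀⟩
    have hYcne : Yᶜ.Nonempty := ⟨u, fun h => hnr (h : H.Reachable w₀ u).symm⟩
    obtain ⟨e, he⟩ := exists_cross hG hYne hYcne
    rw [hYempty] at he
    exact he
  -- Step 3: conclude connectivity of the induced graph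
  haveI : Nonempty A := ⟨⟨u, hu⟩⟩
  refine ⟨?_⟩
  rintro ⟨a, ha⟩ ⟨b, hb⟩
  have h1 := hreach a ha
  have h2 := hreach b hb
  obtain ⟨p⟩ := h1.symm.trans h2
  exact walk_induce p ha hb

lemma good_compl {A : Set V} {u v : V} (h : GoodFor G u v A) : GoodFor G v u Aᶜ := by
  obtain ⟨hu, hv, hc⟩ := h
  refine ⟨hv, by simpa using hu, ?_⟩
  rw [cut_compl, hc, lam_symm]

theorem IsBondSep_of_good (hG : G.Connected) {A : Set V} (h : GoodSide G A) : IsBondSep G A := by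
  obtain ⟨u, v, hgood⟩ := h
  exact ⟨⟨u, hgood.1⟩, ⟨v, hgood.2.1⟩, min_side_connected hG hgood,
    min_side_connected hG (good_compl hgood)⟩

end Mid

section Nest

lemma Nested.refl (A : Set V) : Nested A A := Or.inl (subset_refl A)

lemma Nested.symm {A C : Set V} (h : Nested A C) : Nested C A := by
  rcases h with h | h | h | h
  · exact Or.inr (Or.inr (Or.inr (Set.compl_subset_compl.2 h)))
  · exact Or.inr (Or.inl (fun x hx hxA => h hxA hx))
  · exact Or.inr (Or.inr (Or.inl (fun x hx => by by_contra hA; exact hx (h hA))))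
  · exact Or.inl (fun x hx => by by_contra hA; exact h hA hx)

lemma nested_compl_right {A C : Set V} : Nested A Cᶜ ↔ Nested A C := by
  unfold Nested
  rw [compl_compl]
  tauto

lemma nested_compl_left {A C : Set V} : Nested Aᶜ C ↔ Nested A C := by
  unfold Nested
  rw [compl_compl]
  tauto

lemma crosses_compl_left {A C : Set V} : Crosses Aᶜ C ↔ Crosses A C := by
  unfold Crosses; rw [nested_compl_left]

lemma crosses_compl_right {A C : Set V} : Crosses A Cᶜ ↔ Crosses A C := by
  unfold Crosses; rw [nested_compl_right]

lemma crosses_quadrants {A C : Set V} (h : Crosses A C) :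
    (A ∩ C).Nonempty ∧ (A ∩ Cᶜ).Nonempty ∧ (Aᶜ ∩ C).Nonempty ∧ (Aᶜ ∩ Cᶜ).Nonempty := by
  unfold Crosses Nested at h
  push_neg at h
  obtain ⟨h1, h2, h3, h4⟩ := h
  refine ⟨?_, ?_, ?_, ?_⟩
  · obtain ⟨x, hx, hx'⟩ := Set.not_subset.1 h2; exact ⟨x, hx, by simpa using hx'⟩
  · obtain ⟨x, hx, hx'⟩ := Set.not_subset.1 h1; exact ⟨x, hx, hx'⟩
  · obtain ⟨x, hx, hx'⟩ := Set.not_subset.1 h4; exact ⟨x, hx, by simpa using hx'⟩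
  · obtain ⟨x, hx, hx'⟩ := Set.not_subset.1 h3; exact ⟨x, hx, hx'⟩

/-- helper: D ⊆ X and Dᶜ ⊆ Y is impossible if some point avoids both X and Y. -/
lemma mixed_absurd {D X Y : Set V} (h : D ⊆ X) (h' : Dᶜ ⊆ Y) {x : V}
    (hx1 : x ∉ X) (hx2 : x ∉ Y) : False := by
  by_cases hD : x ∈ D
  · exact hx1 (h hD)
  · exact hx2 (h' hD)

/-- core corner lemma: if A,C cross and D is nested with both, D is nested with A ∩ C. -/
lemma nested_corner_inter {A C D : Set V} (hx : Crosses A C)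
    (hDA : Nested D A) (hDC : Nested D C) : Nested D (A ∩ C) := by
  obtain ⟨q1, q2, q3, q4⟩ := crosses_quadrants hx
  obtain ⟨x1, hA1, hC1⟩ := q1
  obtain ⟨x2, hA2, hC2⟩ := q2
  obtain ⟨x3, hA3, hC3⟩ := q3
  obtain ⟨x4, hA4, hC4⟩ := q4
  rcases hDA with h | h | h | h <;> rcases hDC with h' | h' | h' | h'
  · exact Or.inl (Set.subset_inter h h')
  · exact Or.inr (Or.inl (fun y hy h2 => (h' hy) h2.2))
  · exact (mixed_absurd h h' hA4 hC4).elim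
  · exact (mixed_absurd h h' hA3 (fun hc => hc hC3)).elim
  · exact Or.inr (Or.inl (fun y hy h2 => (h hy) h2.1))
  · exact Or.inr (Or.inl (fun y hy h2 => (h hy) h2.1))
  · exact (mixed_absurd h h' (fun ha => ha hA2) hC2).elim
  · exact (mixed_absurd h h' (fun ha => ha hA1) (fun hc => hc hC1)).elim
  · exact (mixed_absurd h' h hC4 hA4).elim
  · exact (mixed_absurd h' h (fun hc => hc hC3) hA3).elim
  · exact Or.inr (Or.inr (Or.inl (Set.subset_inter h h')))
  · exact Or.inr (Or.inr (Or.inr (fun y hy h2 => (h' hy) h2.2)))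
  · exact (mixed_absurd h' h hC2 (fun ha => ha hA2)).elim
  · exact (mixed_absurd h' h (fun hc => hc hC1) (fun ha => ha hA1)).elim
  · exact Or.inr (Or.inr (Or.inr (fun y hy h2 => (h hy) h2.1)))
  · exact Or.inr (Or.inr (Or.inr (fun y hy h2 => (h hy) h2.1)))

lemma nested_corner_union {A C D : Set V} (hx : Crosses A C)
    (hDA : Nested D A) (hDC : Nested D C) : Nested D (A ∪ C) := by
  have : Nested D (Aᶜ ∩ Cᶜ) := nested_corner_inter
    (crosses_compl_right.2 (crosses_compl_left.2 hx))
    (nested_compl_right.2 hDA) (nested_compl_right.2 hDC)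
  rw [← nested_compl_right, Set.compl_union]
  exact this

end Nest

section Submod
set_option linter.unusedSectionVars false

lemma cut_union_subset (G : SimpleGraph V) (A C : Set V) :
    cutEdges G (A ∩ C) ∪ cutEdges G (A ∪ C) ⊆ cutEdges G A ∪ cutEdges G C := by
  intro e
  induction e using Sym2.ind with
  | _ x y =>
    simp only [Set.mem_union, mem_cut, Set.mem_inter_iff, Set.mem_union]
    tauto

lemma cut_inter_subset (G : SimpleGraph V) (A C : Set V) :
    cutEdges G (A ∩ C) ∩ cutEdges G (A ∪ C) ⊆ cutEdges G A ∩ cutEdges G C := by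
  intro e
  induction e using Sym2.ind with
  | _ x y =>
    simp only [Set.mem_inter_iff, mem_cut, Set.mem_union]
    tauto

lemma submod [Finite V] (G : SimpleGraph V) (A C : Set V) :
    (cutEdges G (A ∩ C)).ncard + (cutEdges G (A ∪ C)).ncard ≤
      (cutEdges G A).ncard + (cutEdges G C).ncard := by
  have h1 := Set.ncard_union_add_ncard_inter (cutEdges G (A ∩ C)) (cutEdges G (A ∪ C))
    (cut_finite G _) (cut_finite G _)
  have h2 := Set.ncard_union_add_ncard_inter (cutEdges G A) (cutEdges G C)
    (cut_finite G _) (cut_finite G _)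
  have h3 := Set.ncard_le_ncard (cut_union_subset G A C)
    ((cut_finite G A).union (cut_finite G C))
  have h4 := Set.ncard_le_ncard (cut_inter_subset G A C)
    ((cut_finite G A).inter_of_left _)
  omega

end Submod

section Uncross
set_option linter.unusedSectionVars false
variable [Finite V] {G : SimpleGraph V}

lemma inter_good {A C : Set V} {u v x y : V}
    (hAc : (cutEdges G A).ncard = lam G u v) (hCc : (cutEdges G C).ncard = lam G x y)
    (hu : u ∈ A ∪ C) (hv : v ∉ A ∪ C) (hx : x ∈ A ∩ C) (hy : y ∉ A ∩ C) :
    GoodFor G x y (A ∩ C) := by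
  refine ⟨hx, hy, ?_⟩
  have h1 : lam G x y ≤ (cutEdges G (A ∩ C)).ncard := cut_ge_lam hx hy
  have h2 : lam G u v ≤ (cutEdges G (A ∪ C)).ncard := cut_ge_lam hu hv
  have h3 := submod G A C
  omega

lemma hard_case {A C : Set V} {u v x y : V}
    (hAc : (cutEdges G A).ncard = lam G u v) (hCc : (cutEdges G C).ncard = lam G x y)
    (hu : u ∈ A) (hv : v ∉ A) (hx : x ∈ A) (hy : y ∉ A)
    (huC : u ∉ C) (hvC : v ∈ C) (hxC : x ∈ C) (hyC : y ∉ C) :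
    GoodFor G x y (A ∩ C) := by
  refine ⟨⟨hx, hxC⟩, fun h2 => hy h2.1, ?_⟩
  have s1 := submod G A C
  have s2 := submod G A Cᶜ
  rw [cut_compl] at s2
  have h1 : lam G x y ≤ (cutEdges G (A ∪ C)).ncard :=
    cut_ge_lam (Or.inl hx) (fun h => h.elim hy hyC)
  have h2 : lam G u v ≤ (cutEdges G (A ∩ Cᶜ)).ncard :=
    cut_ge_lam ⟨hu, huC⟩ (fun h => hv h.1)
  have h3 : lam G u v ≤ (cutEdges G (A ∪ Cᶜ)).ncard :=
    cut_ge_lam (Or.inl hu) (fun h => h.elim hv (fun hc => hc hvC))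
  have h4 : lam G x y ≤ (cutEdges G (A ∩ C)).ncard :=
    cut_ge_lam ⟨hx, hxC⟩ (fun h => hy h.1)
  omega

/-- the corner `P` (a quadrant of A, C) is nested with `A` and with anything
nested with both `A` and `C`. -/
lemma corner_package_inter {A C : Set V} (hx : Crosses A C) :
    (Nested A (A ∩ C) ∧ ∀ D, Nested D A → Nested D C → Nested D (A ∩ C)) ∧
    (Nested A (A ∩ Cᶜ) ∧ ∀ D, Nested D A → Nested D C → Nested D (A ∩ Cᶜ)) ∧
    (Nested A (Aᶜ ∩ C) ∧ ∀ D, Nested D A → Nested D C → Nested D (Aᶜ ∩ C)) ∧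
    (Nested A (Aᶜ ∩ Cᶜ) ∧ ∀ D, Nested D A → Nested D C → Nested D (Aᶜ ∩ Cᶜ)) := by
  refine ⟨⟨?_, fun D h1 h2 => nested_corner_inter hx h1 h2⟩,
    ⟨?_, fun D h1 h2 => nested_corner_inter (crosses_compl_right.2 hx) h1 (nested_compl_right.2 h2)⟩,
    ⟨?_, fun D h1 h2 => nested_corner_inter (crosses_compl_left.2 hx) (nested_compl_right.2 h1) h2⟩,
    ⟨?_, fun D h1 h2 => nested_corner_inter (crosses_compl_left.2 (crosses_compl_right.2 hx))
      (nested_compl_right.2 h1) (nested_compl_right.2 h2)⟩⟩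
  · exact Or.inr (Or.inr (Or.inr (fun z hz h2 => hz h2.1)))
  · exact Or.inr (Or.inr (Or.inr (fun z hz h2 => hz h2.1)))
  · exact Or.inr (Or.inl (fun z hz h2 => h2.1 hz))
  · exact Or.inr (Or.inl (fun z hz h2 => h2.1 hz))

lemma uncross {A C : Set V} {u v x y : V}
    (hA : GoodFor G u v A) (hC : GoodFor G x y C) (hcr : Crosses A C) :
    ∃ C', GoodFor G x y C' ∧ Nested A C' ∧
      ∀ D, Nested D A → Nested D C → Nested D C' := by
  obtain ⟨hu, hv, hAc⟩ := hA
  obtain ⟨hxC, hyC, hCc⟩ := hC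
  obtain ⟨⟨n1, p1⟩, ⟨n2, p2⟩, ⟨n3, p3⟩, ⟨n4, p4⟩⟩ := corner_package_inter hcr
  have hAc' : (cutEdges G Aᶜ).ncard = lam G v u := by rw [cut_compl, hAc, lam_symm]
  have hCc' : (cutEdges G Cᶜ).ncard = lam G y x := by rw [cut_compl, hCc, lam_symm]
  have compl_pack : ∀ C', (Nested A C' ∧ ∀ D, Nested D A → Nested D C → Nested D C') →
      (Nested A C'ᶜ ∧ ∀ D, Nested D A → Nested D C → Nested D C'ᶜ) :=
    fun C' ⟨ha, hd⟩ => ⟨nested_compl_right.2 ha, fun D h1 h2 => nested_compl_right.2 (hd D h1 h2)⟩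
  by_cases hxA : x ∈ A <;> by_cases hyA : y ∈ A
  · -- x ∈ A, y ∈ A
    by_cases hvC : v ∈ C
    · -- C' = (A ∩ Cᶜ)ᶜ
      refine ⟨(A ∩ Cᶜ)ᶜ, ?_, compl_pack _ ⟨n2, p2⟩⟩
      have : GoodFor G y x (A ∩ Cᶜ) := inter_good hAc hCc'
        (Or.inl hu) (fun h => h.elim hv (fun hc => hc hvC))
        ⟨hyA, hyC⟩ (fun h => h.2 hxC)
      exact good_compl this
    · -- C' = A ∩ C
      exact ⟨A ∩ C, inter_good hAc hCc (Or.inl hu) (fun h => h.elim hv hvC)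
        ⟨hxA, hxC⟩ (fun h => hyC h.2), n1, p1⟩
  · -- x ∈ A, y ∉ A
    by_cases huC : u ∈ C
    · -- C' = (Aᶜ ∩ Cᶜ)ᶜ  (= A ∪ C)
      refine ⟨(Aᶜ ∩ Cᶜ)ᶜ, ?_, compl_pack _ ⟨n4, p4⟩⟩
      have : GoodFor G y x (Aᶜ ∩ Cᶜ) := inter_good hAc' hCc'
        (Or.inl (fun h => hv h)) (fun h => h.elim (fun h2 => h2 hu) (fun h2 => h2 huC))
        ⟨hyA, hyC⟩ (fun h => h.1 hxA)
      exact good_compl this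
    · by_cases hvC : v ∈ C
      · -- hard case: C' = A ∩ C
        exact ⟨A ∩ C, hard_case hAc hCc hu hv hxA hyA huC hvC hxC hyC, n1, p1⟩
      · -- C' = A ∩ C
        exact ⟨A ∩ C, inter_good hAc hCc (Or.inl hu) (fun h => h.elim hv hvC)
          ⟨hxA, hxC⟩ (fun h => hyA h.1), n1, p1⟩
  · -- x ∉ A, y ∈ A
    by_cases hvC : v ∈ C
    · -- C' = (A ∩ Cᶜ)ᶜ  (= Aᶜ ∪ C)
      refine ⟨(A ∩ Cᶜ)ᶜ, ?_, compl_pack _ ⟨n2, p2⟩⟩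
      have : GoodFor G y x (A ∩ Cᶜ) := inter_good hAc hCc'
        (Or.inl hu) (fun h => h.elim hv (fun hc => hc hvC))
        ⟨hyA, hyC⟩ (fun h => hxA h.1)
      exact good_compl this
    · by_cases huC : u ∈ C
      · -- hard case with Aᶜ: C' = Aᶜ ∩ C
        exact ⟨Aᶜ ∩ C, hard_case hAc' hCc hv (fun h => h hu) hxA (fun h => h hyA)
          hvC huC hxC hyC, n3, p3⟩
      · -- C' = Aᶜ ∩ C
        exact ⟨Aᶜ ∩ C, inter_good hAc' hCc (Or.inl hv)
          (fun h => h.elim (fun h2 => h2 hu) huC) ⟨hxA, hxC⟩ (fun h => hyC h.2), n3, p3⟩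
  · -- x ∉ A, y ∉ A
    by_cases huC : u ∈ C
    · -- C' = (Aᶜ ∩ Cᶜ)ᶜ
      refine ⟨(Aᶜ ∩ Cᶜ)ᶜ, ?_, compl_pack _ ⟨n4, p4⟩⟩
      have : GoodFor G y x (Aᶜ ∩ Cᶜ) := inter_good hAc' hCc'
        (Or.inl (fun h => hv h)) (fun h => h.elim (fun h2 => h2 hu) (fun h2 => h2 huC))
        ⟨hyA, hyC⟩ (fun h => h.2 hxC)
      exact good_compl this
    · -- C' = Aᶜ ∩ C
      exact ⟨Aᶜ ∩ C, inter_good hAc' hCc (Or.inl hv)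
        (fun h => h.elim (fun h2 => h2 hu) huC) ⟨hxA, hxC⟩ (fun h => hyC h.2), n3, p3⟩

end Uncross

section Family
set_option linter.unusedSectionVars false
variable [Finite V] {G : SimpleGraph V}

lemma exists_good_nested (M : Set (Set V)) (hMg : ∀ D ∈ M, GoodSide G D)
    (hMn : ∀ D ∈ M, ∀ E ∈ M, Nested D E) {u v : V} (huv : u ≠ v) :
    ∃ C, GoodFor G u v C ∧ ∀ D ∈ M, Nested D C := by
  obtain ⟨C₀, hC₀⟩ := exists_min_side u v huv
  suffices H : ∀ n C, GoodFor G u v C → ({D ∈ M | Crosses D C}).ncard ≤ n →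
      ∃ C', GoodFor G u v C' ∧ ∀ D ∈ M, Nested D C' from H _ C₀ hC₀ le_rfl
  intro n
  induction n with
  | zero =>
    intro C hC hcard
    refine ⟨C, hC, fun D hD => ?_⟩
    by_contra hcr
    have hmem : D ∈ {D ∈ M | Crosses D C} := ⟨hD, hcr⟩
    have : ({D ∈ M | Crosses D C}).ncard = 0 := Nat.le_zero.1 hcard
    rw [Set.ncard_eq_zero (Set.toFinite _)] at this
    rw [this] at hmem
    exact hmem
  | succ n ih =>
    intro C hC hcard
    by_cases hex : ∃ D ∈ M, Crosses D C
    · obtain ⟨A, hAM, hcr⟩ := hex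
      obtain ⟨uA, vA, hA⟩ := hMg A hAM
      obtain ⟨C', hC', hnAC', hpres⟩ := uncross hA hC hcr
      apply ih C' hC'
      have hsub : {D ∈ M | Crosses D C'} ⊆ {D ∈ M | Crosses D C} \ {A} := by
        rintro D ⟨hDM, hDcr⟩
        refine ⟨⟨hDM, ?_⟩, ?_⟩
        · by_contra hn
          exact hDcr (hpres D (hMn D hDM A hAM) (not_not.1 hn))
        · rintro rfl
          exact hDcr hnAC'
      have h1 : ({D ∈ M | Crosses D C'}).ncard ≤ ({D ∈ M | Crosses D C} \ {A}).ncard :=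
        Set.ncard_le_ncard hsub (Set.toFinite _)
      have h2 : ({D ∈ M | Crosses D C} \ {A}).ncard = ({D ∈ M | Crosses D C}).ncard - 1 :=
        Set.ncard_diff_singleton_of_mem (show A ∈ {D ∈ M | Crosses D C} from ⟨hAM, hcr⟩)
      have h3 : 1 ≤ ({D ∈ M | Crosses D C}).ncard :=
        (Set.ncard_pos (Set.toFinite _)).2 ⟨A, hAM, hcr⟩
      omega
    · push_neg at hex
      exact ⟨C, hC, fun D hD => not_not.1 (hex D hD)⟩

lemma build_family (S : Finset (V × V)) :
    ∃ M : Set (Set V), (∀ D ∈ M, GoodSide G D) ∧ (∀ D ∈ M, ∀ E ∈ M, Nested D E) ∧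
      ∀ p ∈ S, p.1 ≠ p.2 → ∃ A ∈ M, GoodFor G p.1 p.2 A := by
  classical
  induction S using Finset.induction_on with
  | empty => exact ⟨∅, fun D h => h.elim, fun D h => h.elim, fun p h => absurd h (by simp)⟩
  | insert a s hpS ih =>
    obtain ⟨M, h1, h2, h3⟩ := ih
    by_cases hp : a.1 = a.2
    · refine ⟨M, h1, h2, fun p hmem hne => ?_⟩
      rcases Finset.mem_insert.1 hmem with rfl | hm
      · exact absurd hp hne
      · exact h3 p hm hne
    · obtain ⟨C, hC, hnest⟩ := exists_good_nested M h1 h2 hp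
      refine ⟨insert C M, ?_, ?_, ?_⟩
      · rintro D (rfl | hD)
        · exact ⟨a.1, a.2, hC⟩
        · exact h1 D hD
      · rintro D (rfl | hD) E (rfl | hE)
        · exact Nested.refl _
        · exact (hnest E hE).symm
        · exact hnest D hD
        · exact h2 D hD E hE
      · rintro p hmem hne
        rcases Finset.mem_insert.1 hmem with rfl | hm
        · exact ⟨C, Or.inl rfl, hC⟩
        · obtain ⟨A, hAM, hgood⟩ := h3 p hm hne
          exact ⟨A, Or.inr hAM, hgood⟩

end Family

lemma insep_refl (G : SimpleGraph V) (k : ℕ) (v : V) : Insep G k v v :=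
  fun _ _ _ => Reachable.refl v


/-- Theorem 1 (finite case): every finite connected graph has a nested set of bonds
that efficiently distinguishes all its edge-blocks. -/
theorem stmt_18 [Fintype V] (G : SimpleGraph V) (hG : G.Connected) :
    ∃ M : Set (Set V), (∀ A ∈ M, IsBondSep G A) ∧
      (∀ A ∈ M, ∀ C ∈ M, Nested A C) ∧
      ∀ k₁ k₂ B₁ B₂, IsEdgeBlock G k₁ B₁ → IsEdgeBlock G k₂ B₂ →
        Disjoint B₁ B₂ →
        ∃ A ∈ M, (B₁ ⊆ A ∧ B₂ ⊆ Aᶜ ∨ B₂ ⊆ A ∧ B₁ ⊆ Aᶜ) ∧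
          (cutEdges G A).ncard = sepOrder G B₁ B₂ := by
    classical
  obtain ⟨M, h1, h2, h3⟩ := build_family (G := G) Finset.univ
  refine ⟨M, fun A hA => IsBondSep_of_good hG (h1 A hA), h2, ?_⟩
  rintro k₁ k₂ B₁ B₂ ⟨v₁, rfl⟩ ⟨v₂, rfl⟩ hdisj
  set B₁ := {w | Insep G k₁ v₁ w} with hB₁
  set B₂ := {w | Insep G k₂ v₂ w} with hB₂
  have hv₁ : v₁ ∈ B₁ := insep_refl G k₁ v₁
  have hv₂ : v₂ ∈ B₂ := insep_refl G k₂ v₂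
  have hne : v₁ ≠ v₂ := by
    rintro rfl
    exact Set.disjoint_left.1 hdisj hv₁ hv₂
  obtain ⟨A, hAM, hA1, hA2, hAc⟩ := h3 (v₁, v₂) (Finset.mem_univ _) hne
  replace hA1 : v₁ ∈ A := hA1
  replace hA2 : v₂ ∉ A := hA2
  replace hAc : (cutEdges G A).ncard = lam G v₁ v₂ := hAc
  -- lam < k₁ and lam < k₂
  have hlt₁ : lam G v₁ v₂ < k₁ := by
    have hni : ¬ Insep G k₁ v₁ v₂ := fun h =>
      Set.disjoint_left.1 hdisj (h : v₂ ∈ B₁) hv₂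
    unfold Insep at hni
    push_neg at hni
    obtain ⟨F, hFfin, hFlt, hFsep⟩ := hni
    exact lt_of_le_of_lt (lam_le hFfin hFsep) hFlt
  have hlt₂ : lam G v₁ v₂ < k₂ := by
    have hni : ¬ Insep G k₂ v₂ v₁ := fun h =>
      Set.disjoint_right.1 hdisj (h : v₁ ∈ B₂) hv₁
    unfold Insep at hni
    push_neg at hni
    obtain ⟨F, hFfin, hFlt, hFsep⟩ := hni
    refine lt_of_le_of_lt (lam_le hFfin (fun hr => hFsep hr.symm)) hFlt
  -- blocks lie on the two sides
  have hB₁A : B₁ ⊆ A := by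
    intro w hw
    have hr : (G.deleteEdges (cutEdges G A)).Reachable v₁ w :=
      hw (cutEdges G A) (cut_finite G A) (by rw [hAc]; exact hlt₁)
    exact cutClosure hr hA1
  have hB₂A : B₂ ⊆ Aᶜ := by
    intro w hw
    have hr : (G.deleteEdges (cutEdges G A)).Reachable v₂ w :=
      hw (cutEdges G A) (cut_finite G A) (by rw [hAc]; exact hlt₂)
    rw [← cut_compl] at hr
    exact cutClosure hr hA2
  -- sepOrder equals lam
  have hmem : (cutEdges G A).ncard ∈
      {n | ∃ F : Set (Sym2 V), F.Finite ∧ F.ncard = n ∧ SepSets G B₁ B₂ F} :=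
    ⟨cutEdges G A, cut_finite G A, rfl, fun a ha b hb => sep_of_cut (hB₁A ha) (hB₂A hb)⟩
  have hlb : ∀ n ∈ {n | ∃ F : Set (Sym2 V), F.Finite ∧ F.ncard = n ∧ SepSets G B₁ B₂ F},
      lam G v₁ v₂ ≤ n := by
    rintro n ⟨F, hFfin, rfl, hFsep⟩
    exact lam_le hFfin (hFsep v₁ hv₁ v₂ hv₂)
  have hsep : sepOrder G B₁ B₂ = lam G v₁ v₂ := by
    have hle : sepOrder G B₁ B₂ ≤ (cutEdges G A).ncard := Nat.sInf_le hmem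
    have hge : lam G v₁ v₂ ≤ sepOrder G B₁ B₂ :=
      hlb _ (Nat.sInf_mem ⟨_, hmem⟩)
    rw [hAc] at hle
    omega
  exact ⟨A, hAM, Or.inl ⟨hB₁A, hB₂A⟩, by rw [hAc, hsep]⟩
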